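/- If a sequence of sub-probability measures μ_n on ℝ^d converges vaguely to a sub-probability measure α, then one can write μ_n = α_n + β_n with sub-probability measures α_n, β_n such that α_n converges weakly to α and β_n converges vaguely to 0. -/

import Mathlib

open MeasureTheory Filter Topology Metric

/-- Continuous cutoff: 1 on the ball of radius `k`, 0 outside radius `k+1`. -/
noncomputable def chi (d : ℕ) (k : ℕ) (x : EuclideanSpace ℝ (Fin d)) : ℝ :=
  max 0 (min 1 ((k : ℝ) + 1 - ‖x‖))

lemma chi_continuous (d k : ℕ) : Continuous (chi d k) := by
  unfold chi; fun_prop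

lemma chi_nonneg (d k : ℕ) (x : EuclideanSpace ℝ (Fin d)) : 0 ≤ chi d k x :=
  le_max_left _ _

lemma chi_le_one (d k : ℕ) (x : EuclideanSpace ℝ (Fin d)) : chi d k x ≤ 1 :=
  max_le (by norm_num) (min_le_left _ _)

lemma chi_eq_one (d k : ℕ) (x : EuclideanSpace ℝ (Fin d)) (h : ‖x‖ ≤ (k : ℝ)) :
    chi d k x = 1 := by
  have : min 1 ((k : ℝ) + 1 - ‖x‖) = 1 := min_eq_left (by linarith)
  rw [chi, this]; norm_num

lemma chi_eq_zero (d k : ℕ) (x : EuclideanSpace ℝ (Fin d)) (h : (k : ℝ) + 1 ≤ ‖x‖) :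
    chi d k x = 0 :=
  max_eq_left (le_trans (min_le_right _ _) (by linarith))

lemma chi_hcs (d k : ℕ) : HasCompactSupport (chi d k) := by
  apply HasCompactSupport.intro (isCompact_closedBall (0 : EuclideanSpace ℝ (Fin d)) ((k : ℝ) + 1))
  intro x hx
  exact chi_eq_zero d k x (le_of_lt (by simpa [mem_closedBall_zero_iff] using hx))

lemma chi_integrable (d k : ℕ) (ν : Measure (EuclideanSpace ℝ (Fin d))) [IsFiniteMeasure ν] :
    Integrable (chi d k) ν :=
  (chi_continuous d k).integrable_of_hasCompactSupport (chi_hcs d k)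

lemma meas_closedBall_le (d k : ℕ) (ν : Measure (EuclideanSpace ℝ (Fin d))) [IsFiniteMeasure ν] :
    (ν (closedBall 0 (k : ℝ))).toReal ≤ ∫ x, chi d k x ∂ν := by
  have h1 : (ν (closedBall 0 (k : ℝ))).toReal = ∫ _ in closedBall 0 (k : ℝ), (1 : ℝ) ∂ν := by
    simp [Measure.real]
  rw [h1]
  calc ∫ _ in closedBall 0 (k : ℝ), (1 : ℝ) ∂ν
      ≤ ∫ x in closedBall 0 (k : ℝ), chi d k x ∂ν := by
        apply setIntegral_mono_on (by simp [integrableOn_const, measure_lt_top])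
          (chi_integrable d k ν).integrableOn measurableSet_closedBall
        intro x hx
        exact (chi_eq_one d k x (mem_closedBall_zero_iff.1 hx)).ge
    _ ≤ ∫ x, chi d k x ∂ν :=
        setIntegral_le_integral (chi_integrable d k ν) (ae_of_all _ (chi_nonneg d k))

lemma integral_chi_le (d k : ℕ) (ν : Measure (EuclideanSpace ℝ (Fin d))) [IsFiniteMeasure ν] :
    ∫ x, chi d k x ∂ν ≤ (ν Set.univ).toReal := by
  calc ∫ x, chi d k x ∂ν ≤ ∫ _, (1 : ℝ) ∂ν :=
        integral_mono (chi_integrable d k ν) (integrable_const 1) (chi_le_one d k)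
    _ = (ν Set.univ).toReal := by simp [Measure.real]

lemma tendsto_integral_chi (d : ℕ) (ν : Measure (EuclideanSpace ℝ (Fin d))) [IsFiniteMeasure ν] :
    Tendsto (fun k => ∫ x, chi d k x ∂ν) atTop (𝓝 (ν Set.univ).toReal) := by
  have h := tendsto_integral_of_dominated_convergence (μ := ν) (F := fun k => chi d k)
    (f := fun _ => (1 : ℝ)) (fun _ => (1 : ℝ))
    (fun k => (chi_continuous d k).aestronglyMeasurable) (integrable_const 1)
    (fun k => ae_of_all _ fun x => by
      rw [Real.norm_eq_abs, abs_of_nonneg (chi_nonneg d k x)]; exact chi_le_one d k x)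
    (ae_of_all _ fun x => by
      apply tendsto_atTop_of_eventually_const (i₀ := ⌈‖x‖⌉₊)
      intro k hk
      exact chi_eq_one d k x (le_trans (Nat.le_ceil _) (by exact_mod_cast hk)))
  simpa [Measure.real] using h

lemma integrable_of_bound (d : ℕ) (f : EuclideanSpace ℝ (Fin d) → ℝ) (hf : Continuous f)
    (C : ℝ) (hC : ∀ x, |f x| ≤ C) (ν : Measure (EuclideanSpace ℝ (Fin d))) [IsFiniteMeasure ν] :
    Integrable f ν :=
  (integrable_const C).mono' hf.aestronglyMeasurable
    (ae_of_all _ fun x => by rw [Real.norm_eq_abs]; exact hC x)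

lemma abs_integral_mul_one_sub_chi_le (d K : ℕ) (f : EuclideanSpace ℝ (Fin d) → ℝ)
    (hf : Continuous f) (C : ℝ) (hC : ∀ x, |f x| ≤ C) (hC0 : 0 ≤ C)
    (ν : Measure (EuclideanSpace ℝ (Fin d))) [IsFiniteMeasure ν] :
    |∫ x, f x * (1 - chi d K x) ∂ν| ≤ C * ((ν Set.univ).toReal - ∫ x, chi d K x ∂ν) := by
  have hbInt : Integrable (fun x => C * (1 - chi d K x)) ν := by
    have := (integrable_const C).sub ((chi_integrable d K ν).const_mul C)
    simpa [mul_sub, Pi.sub_def] using this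
  have hbd : ∀ x, |f x * (1 - chi d K x)| ≤ C * (1 - chi d K x) := by
    intro x
    rw [abs_mul, abs_of_nonneg (by linarith [chi_le_one d K x] : (0:ℝ) ≤ 1 - chi d K x)]
    exact mul_le_mul_of_nonneg_right (hC x) (by linarith [chi_le_one d K x])
  have hgInt : Integrable (fun x => f x * (1 - chi d K x)) ν := by
    apply (hbInt.mono' ((hf.mul (continuous_const.sub (chi_continuous d K))).aestronglyMeasurable))
    exact ae_of_all _ fun x => by rw [Real.norm_eq_abs]; exact hbd x
  calc |∫ x, f x * (1 - chi d K x) ∂ν| ≤ ∫ x, |f x * (1 - chi d K x)| ∂ν := by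
        simp only [← Real.norm_eq_abs]
        exact norm_integral_le_integral_norm (fun x => f x * (1 - chi d K x)) (μ := ν)
    _ ≤ ∫ x, C * (1 - chi d K x) ∂ν := integral_mono hgInt.abs hbInt hbd
    _ = C * ((ν Set.univ).toReal - ∫ x, chi d K x ∂ν) := by
        rw [integral_const_mul, integral_sub (integrable_const 1) (chi_integrable d K ν)]
        simp [Measure.real]

/-- If sub-probability measures μ_n converge vaguely to α, then μ_n = α_n + β_n
where α_n converges weakly to α and β_n converges vaguely to 0. -/
theorem stmt4 (d : ℕ) (μ : ℕ → Measure (EuclideanSpace ℝ (Fin d)))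
    (α : Measure (EuclideanSpace ℝ (Fin d)))
    (hμ : ∀ n, μ n Set.univ ≤ 1) (hα : α Set.univ ≤ 1)
    (hvague : ∀ f : EuclideanSpace ℝ (Fin d) → ℝ, Continuous f → HasCompactSupport f →
      Tendsto (fun n => ∫ x, f x ∂(μ n)) atTop (𝓝 (∫ x, f x ∂α))) :
    ∃ αs βs : ℕ → Measure (EuclideanSpace ℝ (Fin d)),
      (∀ n, αs n + βs n = μ n) ∧
      (∀ f : EuclideanSpace ℝ (Fin d) → ℝ, Continuous f → (∃ C : ℝ, ∀ x, |f x| ≤ C) →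
        Tendsto (fun n => ∫ x, f x ∂(αs n)) atTop (𝓝 (∫ x, f x ∂α))) ∧
      (∀ f : EuclideanSpace ℝ (Fin d) → ℝ, Continuous f → HasCompactSupport f →
        Tendsto (fun n => ∫ x, f x ∂(βs n)) atTop (𝓝 (0 : ℝ))) := by
  classical
  haveI hfinμ : ∀ n, IsFiniteMeasure (μ n) :=
    fun n => ⟨lt_of_le_of_lt (hμ n) ENNReal.one_lt_top⟩
  haveI hfinα : IsFiniteMeasure α := ⟨lt_of_le_of_lt hα ENNReal.one_lt_top⟩
  set A : ℝ := (α Set.univ).toReal with hA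
  -- thresholds for one-sided mass control
  have hQ : ∀ k : ℕ, ∃ N : ℕ, ∀ n ≥ N, ∫ x, chi d (k+1) x ∂(μ n) ≤ A + 1/(k+1) := by
    intro k
    have h := hvague (chi d (k+1)) (chi_continuous d (k+1)) (chi_hcs d (k+1))
    have hlt : ∫ x, chi d (k+1) x ∂α < A + 1/(k+1) :=
      lt_of_le_of_lt (integral_chi_le d (k+1) α) (by
        have : (0:ℝ) < 1/(k+1) := by positivity
        linarith)
    exact eventually_atTop.1 ((h.eventually_lt_const hlt).mono fun n hn => hn.le)
  choose N hN using hQ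
  -- strictly monotone thresholds
  set N'' : ℕ → ℕ := fun k => Nat.rec (N 0) (fun k ih => max (N (k+1)) ih + 1) k with hN''def
  have hN''succ : ∀ k, N'' (k+1) = max (N (k+1)) (N'' k) + 1 := fun k => rfl
  have hN''mono : StrictMono N'' := strictMono_nat_of_lt_succ fun k => by
    rw [hN''succ]; omega
  have hNle : ∀ k, N k ≤ N'' k := by
    intro k
    cases k with
    | zero => exact le_refl _
    | succ k => rw [hN''succ]; omega
  have hEx : ∀ n : ℕ, ∃ k, n < N'' k := fun n =>
    ⟨n + 1, lt_of_lt_of_le (Nat.lt_succ_self n) (hN''mono.le_apply)⟩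
  set R : ℕ → ℕ := fun n => Nat.find (hEx n) - 1 with hRdef
  have hRtop : Tendsto R atTop atTop := by
    rw [tendsto_atTop_atTop]
    intro K
    refine ⟨N'' K, fun n hn => ?_⟩
    have h1 : n < N'' (Nat.find (hEx n)) := Nat.find_spec (hEx n)
    have h2 : N'' K < N'' (Nat.find (hEx n)) := lt_of_le_of_lt hn h1
    have h3 : K < Nat.find (hEx n) := hN''mono.lt_iff_lt.1 h2
    simp only [hRdef]; omega
  have hRcontrol : ∀ n ≥ N'' 0, ∫ x, chi d (R n + 1) x ∂(μ n) ≤ A + 1/(R n + 1) := by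
    intro n hn
    have hpos : 0 < Nat.find (hEx n) := by
      rcases Nat.eq_zero_or_pos (Nat.find (hEx n)) with h0 | h
      · exfalso
        have := Nat.find_spec (hEx n)
        rw [h0] at this
        omega
      · exact h
    have hmin : ¬ (n < N'' (Nat.find (hEx n) - 1)) := Nat.find_min (hEx n) (by omega)
    have h4 : N (R n) ≤ n := le_trans (hNle (R n)) (by simp only [hRdef]; omega)
    exact hN (R n) n h4
  -- the construction
  set s : ℕ → Set (EuclideanSpace ℝ (Fin d)) := fun n => closedBall 0 ((R n : ℝ) + 1) with hs
  refine ⟨fun n => (μ n).restrict (s n), fun n => (μ n).restrict (s n)ᶜ,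
    fun n => Measure.restrict_add_restrict_compl measurableSet_closedBall, ?_, ?_⟩
  · -- weak convergence
    rintro f hf ⟨C, hC⟩
    have hC0 : 0 ≤ C := le_trans (abs_nonneg _) (hC 0)
    rw [Metric.tendsto_nhds]
    intro ε hε
    set C' : ℝ := C + 1 with hC'
    have hC'pos : 0 < C' := by positivity
    have hCleC' : C ≤ C' := by linarith
    have hδpos : (0:ℝ) < ε/(8*C') := by positivity
    -- choose K
    obtain ⟨K, hK⟩ : ∃ K : ℕ, A - ε/(8*C') < ∫ x, chi d K x ∂α :=
      ((tendsto_integral_chi d α).eventually_const_lt (by linarith)).exists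
    have hKle : ∫ x, chi d K x ∂α ≤ A := integral_chi_le d K α
    -- eventual conditions
    have e1 : ∀ᶠ n in atTop, (K : ℝ) + 2 ≤ (R n : ℝ) + 1 := by
      filter_upwards [hRtop.eventually_ge_atTop (K+1)] with n hn
      have : ((K:ℝ) + 1) ≤ (R n : ℝ) := by exact_mod_cast hn
      linarith
    have e2 : ∀ᶠ n in atTop, ∫ x, chi d (R n + 1) x ∂(μ n) ≤ A + 1/(R n + 1) :=
      eventually_atTop.2 ⟨N'' 0, hRcontrol⟩
    have e3 : ∀ᶠ n in atTop, 1/((R n : ℝ) + 1) < ε/(8*C') := by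
      obtain ⟨M, hM⟩ := exists_nat_one_div_lt hδpos
      filter_upwards [hRtop.eventually_ge_atTop M] with n hn
      have h1 : (M : ℝ) ≤ (R n : ℝ) := by exact_mod_cast hn
      have h2 : 1/((R n : ℝ) + 1) ≤ 1/((M : ℝ) + 1) := by
        apply one_div_le_one_div_of_le (by positivity) (by linarith)
      linarith
    have e4 : ∀ᶠ n in atTop,
        |∫ x, f x * chi d K x ∂(μ n) - ∫ x, f x * chi d K x ∂α| < ε/4 := by
      have h := hvague (fun x => f x * chi d K x) (hf.mul (chi_continuous d K))
        ((chi_hcs d K).mul_left)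
      have := Metric.tendsto_nhds.1 h (ε/4) (by positivity)
      filter_upwards [this] with n hn
      rwa [Real.dist_eq] at hn
    have e5 : ∀ᶠ n in atTop,
        |∫ x, chi d K x ∂(μ n) - ∫ x, chi d K x ∂α| < ε/(8*C') := by
      have h := hvague (chi d K) (chi_continuous d K) (chi_hcs d K)
      have := Metric.tendsto_nhds.1 h _ hδpos
      filter_upwards [this] with n hn
      rwa [Real.dist_eq] at hn
    filter_upwards [e1, e2, e3, e4, e5] with n h1 h2 h3 h4 h5
    rw [Real.dist_eq]
    haveI : IsFiniteMeasure ((μ n).restrict (s n)) := by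
      constructor
      rw [Measure.restrict_apply_univ]
      exact measure_lt_top _ _
    -- f * chi K vanishes off s n
    have hoff : ∀ x ∉ s n, chi d K x = 0 := by
      intro x hx
      apply chi_eq_zero
      have hx' : (R n : ℝ) + 1 < ‖x‖ := by
        simpa [hs, mem_closedBall_zero_iff] using hx
      linarith
    have hχeq : ∫ x, chi d K x ∂((μ n).restrict (s n)) = ∫ x, chi d K x ∂(μ n) :=
      setIntegral_eq_integral_of_forall_compl_eq_zero hoff
    have hfχeq : ∫ x, f x * chi d K x ∂((μ n).restrict (s n))
        = ∫ x, f x * chi d K x ∂(μ n) :=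
      setIntegral_eq_integral_of_forall_compl_eq_zero (fun x hx => by rw [hoff x hx, mul_zero])
    -- mass bound for restricted measure
    have hmass : (((μ n).restrict (s n)) Set.univ).toReal ≤ A + 1/(R n + 1) := by
      rw [Measure.restrict_apply_univ]
      refine le_trans ?_ h2
      have := meas_closedBall_le d (R n + 1) (μ n)
      have hcast : ((R n + 1 : ℕ) : ℝ) = (R n : ℝ) + 1 := by push_cast; ring
      rwa [hcast] at this
    -- split integrals
    have hsplit : ∀ (ν : Measure (EuclideanSpace ℝ (Fin d))), Integrable f ν →
        Integrable (fun x => f x * chi d K x) ν →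
        Integrable (fun x => f x * (1 - chi d K x)) ν →
        ∫ x, f x ∂ν = ∫ x, f x * chi d K x ∂ν + ∫ x, f x * (1 - chi d K x) ∂ν := by
      intro ν _ hi1 hi2
      rw [← integral_add hi1 hi2]
      congr 1
      ext x
      ring
    have hint1n : Integrable (fun x => f x * chi d K x) ((μ n).restrict (s n)) :=
      ((hf.mul (chi_continuous d K)).integrable_of_hasCompactSupport
        (chi_hcs d K).mul_left).restrict
    have hint1α : Integrable (fun x => f x * chi d K x) α :=
      (hf.mul (chi_continuous d K)).integrable_of_hasCompactSupport (chi_hcs d K).mul_left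
    have hintfn : Integrable f ((μ n).restrict (s n)) :=
      integrable_of_bound d f hf C hC _
    have hintfα : Integrable f α := integrable_of_bound d f hf C hC _
    have hint2n : Integrable (fun x => f x * (1 - chi d K x)) ((μ n).restrict (s n)) := by
      have := hintfn.sub hint1n
      apply this.congr
      exact ae_of_all _ fun x => by simp only [Pi.sub_apply]; ring
    have hint2α : Integrable (fun x => f x * (1 - chi d K x)) α := by
      have := hintfα.sub hint1α
      apply this.congr
      exact ae_of_all _ fun x => by simp only [Pi.sub_apply]; ring
    have hsn := hsplit _ hintfn hint1n hint2n
    have hsα := hsplit _ hintfα hint1α hint2α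
    -- bound the tail terms
    have hb1 : |∫ x, f x * (1 - chi d K x) ∂((μ n).restrict (s n))| ≤ 3*(ε/(8*C')) * C := by
      have h := abs_integral_mul_one_sub_chi_le d K f hf C hC hC0 ((μ n).restrict (s n))
      rw [hχeq] at h
      have hχn : ∫ x, chi d K x ∂α - ε/(8*C') ≤ ∫ x, chi d K x ∂(μ n) := by
        have := abs_sub_lt_iff.1 h5
        linarith [this.2]
      have hbound : (((μ n).restrict (s n)) Set.univ).toReal - ∫ x, chi d K x ∂(μ n)
          ≤ 3*(ε/(8*C')) := by
        have := hmass
        linarith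
      calc |∫ x, f x * (1 - chi d K x) ∂((μ n).restrict (s n))|
          ≤ C * ((((μ n).restrict (s n)) Set.univ).toReal - ∫ x, chi d K x ∂(μ n)) := h
        _ ≤ C * (3*(ε/(8*C'))) := mul_le_mul_of_nonneg_left hbound hC0
        _ = 3*(ε/(8*C')) * C := by ring
    have hb2 : |∫ x, f x * (1 - chi d K x) ∂α| ≤ (ε/(8*C')) * C := by
      have h := abs_integral_mul_one_sub_chi_le d K f hf C hC hC0 α
      calc |∫ x, f x * (1 - chi d K x) ∂α|
          ≤ C * (A - ∫ x, chi d K x ∂α) := h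
        _ ≤ C * (ε/(8*C')) := mul_le_mul_of_nonneg_left (by linarith) hC0
        _ = (ε/(8*C')) * C := by ring
    have hCratio : (ε/(8*C')) * C ≤ ε/8 := by
      rw [div_mul_eq_mul_div, mul_comm]
      rw [div_le_div_iff₀ (by positivity) (by norm_num)]
      nlinarith
    have key : ∫ x, f x ∂((μ n).restrict (s n)) - ∫ x, f x ∂α
        = (∫ x, f x * chi d K x ∂(μ n) - ∫ x, f x * chi d K x ∂α)
          + ∫ x, f x * (1 - chi d K x) ∂((μ n).restrict (s n))
          - ∫ x, f x * (1 - chi d K x) ∂α := by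
      rw [hsn, hsα, hfχeq]; ring
    rw [key]
    have habs := abs_sub_lt_iff.1 h4
    have h3' : 3*(ε/(8*C')) * C ≤ 3*(ε/8) := by linarith [hCratio]
    calc |∫ x, f x * chi d K x ∂(μ n) - ∫ x, f x * chi d K x ∂α
          + ∫ x, f x * (1 - chi d K x) ∂((μ n).restrict (s n))
          - ∫ x, f x * (1 - chi d K x) ∂α|
        ≤ |∫ x, f x * chi d K x ∂(μ n) - ∫ x, f x * chi d K x ∂α|
          + |∫ x, f x * (1 - chi d K x) ∂((μ n).restrict (s n))|
          + |∫ x, f x * (1 - chi d K x) ∂α| := by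
          apply (abs_sub _ _).trans
          gcongr
          exact abs_add_le _ _
      _ < ε := by
          have := abs_sub_lt_iff.1 h4
          linarith [hb1, hb2, hCratio, h3']
  · -- vague convergence of the tails to 0
    intro f hf hcs
    obtain ⟨ρ, hρ⟩ : ∃ ρ : ℝ, tsupport f ⊆ closedBall 0 ρ :=
      hcs.isBounded.subset_closedBall 0
    apply Tendsto.congr' _ tendsto_const_nhds
    have hev : ∀ᶠ n in atTop, ρ ≤ (R n : ℝ) + 1 := by
      filter_upwards [hRtop.eventually_ge_atTop ⌈ρ⌉₊] with n hn
      have h1 : ρ ≤ (⌈ρ⌉₊ : ℝ) := Nat.le_ceil ρ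
      have h2 : ((⌈ρ⌉₊ : ℕ) : ℝ) ≤ (R n : ℝ) := by exact_mod_cast hn
      linarith
    filter_upwards [hev] with n hn
    symm
    apply setIntegral_eq_zero_of_forall_eq_zero
    intro x hx
    apply image_eq_zero_of_notMem_tsupport
    intro hmem
    have := mem_closedBall_zero_iff.1 (hρ hmem)
    have hx' : (R n : ℝ) + 1 < ‖x‖ := by
      simpa [hs, mem_closedBall_zero_iff] using hx
    linarith
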